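/- Let k > 8 be an integer and t = tan(π/4 + 2π/k). Let p be a point, F a cone with apex p of opening angle 2π/k, and u, v points in F with v lying on the segment-side such that s, the orthogonal projection of v onto line up, lies on segment up, and the angle ∠upv ≤ 2π/k. Then |vp| + t·|uv| ≤ t·|up|. -/

import Mathlib

open Real

set_option maxHeartbeats 1000000 in
theorem stmt_2 (k : ℕ) (hk : 8 < k) (u v p s : EuclideanSpace ℝ (Fin 2))
    (hup : u ≠ p)
    (hs : s ∈ segment ℝ u p)
    (hperp : (inner ℝ (v - s) (p - u) : ℝ) = 0)
    (hang : EuclideanGeometry.angle u p v ≤ 2 * π / (k : ℝ)) :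
    dist v p + Real.tan (π / 4 + 2 * π / (k : ℝ)) * dist u v ≤
      Real.tan (π / 4 + 2 * π / (k : ℝ)) * dist u p := by
  have hπ : (0:ℝ) < π := Real.pi_pos
  have hk9 : (9:ℝ) ≤ (k : ℝ) := by exact_mod_cast hk
  set θ : ℝ := 2 * π / (k : ℝ) with hθdef
  have hkpos : (0:ℝ) < (k:ℝ) := by linarith
  have hθ0 : 0 < θ := by positivity
  have hθlt : θ < π / 4 := by
    rw [hθdef, div_lt_iff₀ hkpos]
    nlinarith
  have hφlt : π / 4 + θ < π / 2 := by linarith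
  have hcosφ : 0 < Real.cos (π / 4 + θ) :=
    Real.cos_pos_of_mem_Ioo ⟨by linarith, hφlt⟩
  have ht : 0 < Real.tan (π / 4 + θ) :=
    Real.tan_pos_of_pos_of_lt_pi_div_two (by linarith) hφlt
  have hsθ : 0 ≤ Real.sin θ := Real.sin_nonneg_of_nonneg_of_le_pi hθ0.le (by linarith)
  have hcθ : 0 < Real.cos θ := Real.cos_pos_of_mem_Ioo ⟨by linarith, by linarith⟩
  -- key scalar inequality
  have hkey : 1 + Real.tan (π / 4 + θ) * Real.sin θ ≤ Real.tan (π / 4 + θ) * Real.cos θ := by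
    rw [Real.tan_eq_sin_div_cos, div_mul_eq_mul_div, div_mul_eq_mul_div,
      ← le_sub_iff_add_le, ← sub_div, le_div_iff₀ hcosφ]
    have hsum : (1:ℝ) ≤ Real.sin θ + Real.cos θ := by
      nlinarith [Real.sin_sq_add_cos_sq θ, Real.sin_le_one θ, Real.cos_le_one θ]
    have hsadd := Real.sin_add (π/4) θ
    have hcadd := Real.cos_add (π/4) θ
    rw [Real.sin_pi_div_four, Real.cos_pi_div_four] at hsadd hcadd
    have h2 : (0:ℝ) < Real.sqrt 2 := by positivity
    have hcs : Real.sin θ < Real.cos θ := by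
      nlinarith [hcosφ, hcadd]
    nlinarith [hsadd, hcadd, hsum, hcs, Real.sq_sqrt (by norm_num : (0:ℝ) ≤ 2)]
  -- geometry
  obtain ⟨α, β, hα, hβ, hαβ, hsdef⟩ := hs
  have hps : p - s = α • (p - u) := by
    rw [← hsdef]
    have : α = 1 - β := by linarith
    rw [this]
    module
  have hsu : s - u = β • (p - u) := by
    rw [← hsdef]
    have : α = 1 - β := by linarith
    rw [this]
    module
  set D := dist u p with hDdef
  set V := dist v p with hVdef
  set U := dist u v with hUdef
  set a := dist s p with hadef
  set b := dist u s with hbdef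
  set h := dist v s with hhdef
  have hDn : D = ‖p - u‖ := by rw [hDdef, dist_eq_norm, norm_sub_rev]
  have hD0 : 0 < D := dist_pos.mpr hup
  have ha : a = α * D := by
    rw [hadef, dist_eq_norm, norm_sub_rev, hps, norm_smul, Real.norm_eq_abs,
      abs_of_nonneg hα, hDn]
  have hb : b = β * D := by
    rw [hbdef, dist_eq_norm, norm_sub_rev, hsu, norm_smul, Real.norm_eq_abs,
      abs_of_nonneg hβ, hDn]
  have hab : a + b = D := by rw [ha, hb]; linear_combination D * hαβ
  have hinner_sp : (inner ℝ (v - s) (s - p) : ℝ) = 0 := by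
    have : s - p = (-α) • (p - u) := by rw [neg_smul, ← hps]; abel
    rw [this, real_inner_smul_right, hperp, mul_zero]
  have hinner_su : (inner ℝ (v - s) (s - u) : ℝ) = 0 := by
    rw [hsu, real_inner_smul_right, hperp, mul_zero]
  have hV2 : V ^ 2 = h ^ 2 + a ^ 2 := by
    rw [hVdef, hhdef, hadef, dist_eq_norm, dist_eq_norm, dist_eq_norm,
      show v - p = (v - s) + (s - p) by abel, norm_add_sq_real, hinner_sp]
    ring
  have hU2 : U ^ 2 = h ^ 2 + b ^ 2 := by
    rw [hUdef, hhdef, hbdef, dist_comm u v, dist_comm u s, dist_eq_norm, dist_eq_norm,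
      dist_eq_norm, show v - u = (v - s) + (s - u) by abel, norm_add_sq_real, hinner_su]
    ring
  have hinner_up : (inner ℝ (u - p) (v - p) : ℝ) = α * D ^ 2 := by
    rw [show v - p = (v - s) + (s - p) by abel, inner_add_right]
    have h1 : (inner ℝ (u - p) (v - s) : ℝ) = 0 := by
      rw [real_inner_comm, show u - p = (-1 : ℝ) • (p - u) by module,
        real_inner_smul_right, hperp, mul_zero]
    have h2 : (inner ℝ (u - p) (s - p) : ℝ) = α * D ^ 2 := by
      rw [show s - p = (-α) • (p - u) by rw [neg_smul, ← hps]; abel,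
        real_inner_smul_right, show p - u = (-1 : ℝ) • (u - p) by module,
        real_inner_smul_right, real_inner_self_eq_norm_sq]
      rw [hDdef, dist_eq_norm]
      ring
    rw [h1, h2, zero_add]
  have hangle : EuclideanGeometry.angle u p v = InnerProductGeometry.angle (u - p) (v - p) := rfl
  have hcosmul : Real.cos (EuclideanGeometry.angle u p v) * (‖u - p‖ * ‖v - p‖)
      = (inner ℝ (u - p) (v - p) : ℝ) := by
    rw [hangle]
    exact InnerProductGeometry.cos_angle_mul_norm_mul_norm _ _
  have hnu : ‖u - p‖ = D := (dist_eq_norm u p).symm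
  have hnv : ‖v - p‖ = V := (dist_eq_norm v p).symm
  have hAV : Real.cos (EuclideanGeometry.angle u p v) * V = a := by
    have : Real.cos (EuclideanGeometry.angle u p v) * (D * V) = a * D := by
      rw [hnu, hnv] at hcosmul
      rw [hcosmul, hinner_up, ha]; ring
    apply mul_right_cancel₀ (ne_of_gt hD0)
    linear_combination this
  have hang0 := EuclideanGeometry.angle_nonneg u p v
  have hcosmono : Real.cos θ ≤ Real.cos (EuclideanGeometry.angle u p v) :=
    Real.cos_le_cos_of_nonneg_of_le_pi hang0 (by linarith) hang
  have hV0 : (0:ℝ) ≤ V := dist_nonneg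
  have hh0 : (0:ℝ) ≤ h := dist_nonneg
  have hb0 : (0:ℝ) ≤ b := dist_nonneg
  have hacV : Real.cos θ * V ≤ a := by
    rw [← hAV]
    exact mul_le_mul_of_nonneg_right hcosmono hV0
  have hcosangle_le : Real.cos (EuclideanGeometry.angle u p v) ≤ 1 :=
    Real.cos_le_one _
  have hhVs : h ≤ V * Real.sin θ := by
    have ha0 : (0:ℝ) ≤ a := dist_nonneg
    have hsq : (Real.cos θ * V) ^ 2 ≤ a ^ 2 :=
      pow_le_pow_left₀ (mul_nonneg hcθ.le hV0) hacV 2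
    have hid : Real.sin θ ^ 2 = 1 - Real.cos θ ^ 2 := by
      linarith [Real.sin_sq_add_cos_sq θ]
    have hid' : (V * Real.sin θ) ^ 2 = V ^ 2 - (Real.cos θ * V) ^ 2 := by
      linear_combination V ^ 2 * hid
    have hh2 : h ^ 2 ≤ (V * Real.sin θ) ^ 2 := by linarith [hV2]
    have hsqrt := Real.sqrt_le_sqrt hh2
    rwa [Real.sqrt_sq hh0, Real.sqrt_sq (mul_nonneg hV0 hsθ)] at hsqrt
  have hUhb : U ≤ h + b := by
    have hU0 : (0:ℝ) ≤ U := dist_nonneg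
    have hexp : (h + b) ^ 2 = h ^ 2 + 2 * (h * b) + b ^ 2 := by ring
    have hle : U ^ 2 ≤ (h + b) ^ 2 := by
      have := mul_nonneg hh0 hb0
      linarith [hU2]
    have hsqrt := Real.sqrt_le_sqrt hle
    rwa [Real.sqrt_sq hU0, Real.sqrt_sq (by linarith : (0:ℝ) ≤ h + b)] at hsqrt
  -- final combination
  set t := Real.tan (π / 4 + θ) with htdef
  have s1 : t * U ≤ t * (h + b) := mul_le_mul_of_nonneg_left hUhb ht.le
  have s2 : t * h ≤ t * (V * Real.sin θ) := mul_le_mul_of_nonneg_left hhVs ht.le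
  have s3 : V * (1 + t * Real.sin θ) ≤ V * (t * Real.cos θ) :=
    mul_le_mul_of_nonneg_left hkey hV0
  have s4 : t * (Real.cos θ * V) ≤ t * a := mul_le_mul_of_nonneg_left hacV ht.le
  have step : V + t * h ≤ t * a := by
    calc V + t * h ≤ V + t * (V * Real.sin θ) := by linarith [s2]
      _ = V * (1 + t * Real.sin θ) := by ring
      _ ≤ V * (t * Real.cos θ) := s3
      _ = t * (Real.cos θ * V) := by ring
      _ ≤ t * a := s4
  calc V + t * U ≤ V + t * (h + b) := by linarith [s1]
    _ = (V + t * h) + t * b := by ring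
    _ ≤ t * a + t * b := by linarith [step]
    _ = t * (a + b) := by ring
    _ = t * D := by rw [hab]
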